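/- Let V be a finite-dimensional real vector space and L ⊆ 𝕋_ℂV a lagrangian subspace with real index r = dim_ℂ(L ∩ L̄). Set K := (L ∩ L̄) ∩ 𝕋V, the real points of L ∩ L̄. Then: (i) K is an isotropic subspace of 𝕋V with dim_ℝ K = r and L ∩ L̄ equals the complexification K_ℂ of K; (ii) the pairing of 𝕋V induces a well-defined nondegenerate symmetric bilinear form on K^⊥/K (K^⊥ the orthogonal of K in 𝕋V); and (iii) there exists a unique ℝ-linear map J : K^⊥/K → K^⊥/K with J² = −id and ⟨Ju, v⟩ + ⟨u, Jv⟩ = 0 for the induced pairing, such that under the canonical isomorphism (L+L̄)/(L∩L̄) ≅ (K^⊥/K)_ℂ, the image of L equals the +i-eigenspace of the complexification of J. -/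

import Mathlib

open TensorProduct Module

noncomputable section

namespace CDirac


/-- The real generalized tangent space `V ⊕ V*`. -/
abbrev TR (V : Type*) [AddCommGroup V] [Module ℝ V] := V × (V →ₗ[ℝ] ℝ)

variable {V : Type*} [AddCommGroup V] [Module ℝ V]

instance : AddCommGroup (V →ₗ[ℝ] ℝ) := LinearMap.addCommGroup

/-- The canonical pairing `⟨X+ξ, Y+η⟩ = (η X + ξ Y)/2` on `𝕋V`. -/
def pairR (a b : TR V) : ℝ := (b.2 a.1 + a.2 b.1) / 2

lemma pairR_add_left (a a' b : TR V) : pairR (a + a') b = pairR a b + pairR a' b := by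
  simp only [pairR, Prod.fst_add, Prod.snd_add, map_add, LinearMap.add_apply]
  ring

lemma pairR_smul_left (c : ℝ) (a b : TR V) : pairR (c • a) b = c * pairR a b := by
  simp only [pairR, Prod.smul_fst, Prod.smul_snd, map_smul, LinearMap.smul_apply,
    smul_eq_mul]
  ring

/-- Orthogonal complement with respect to the pairing on `𝕋V`. -/
def orthR (L : Submodule ℝ (TR V)) : Submodule ℝ (TR V) where
  carrier := {a | ∀ b ∈ L, pairR a b = 0}
  zero_mem' := fun b _ => by simp [pairR]
  add_mem' := fun {a a'} ha ha' b hb => by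
    rw [pairR_add_left, ha b hb, ha' b hb, add_zero]
  smul_mem' := fun c a ha b hb => by rw [pairR_smul_left, ha b hb, mul_zero]

/-- A real lagrangian subspace: `L = L^⊥`. -/
def IsLagrangianR (L : Submodule ℝ (TR V)) : Prop := L = orthR L

/-- An isotropic subspace of `𝕋V`. -/
def IsIsotropicR (K : Submodule ℝ (TR V)) : Prop := ∀ a ∈ K, ∀ b ∈ K, pairR a b = 0

/-- The quotient `K^⊥/K`. -/
abbrev quotK (K : Submodule ℝ (TR V)) := ↥(orthR K) ⧸ (K.comap (orthR K).subtype)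

/-- The quotient map `K^⊥ → K^⊥/K`. -/
def mkK (K : Submodule ℝ (TR V)) : ↥(orthR K) →ₗ[ℝ] quotK K :=
  (K.comap (orthR K).subtype).mkQ




/-- The complexification `V_ℂ = ℂ ⊗_ℝ V`. -/
abbrev Cx (V : Type*) [AddCommGroup V] [Module ℝ V] := ℂ ⊗[ℝ] V

/-- The complex dual `(V_ℂ)^*`. -/
abbrev DualC (V : Type*) [AddCommGroup V] [Module ℝ V] := Cx V →ₗ[ℂ] ℂ

/-- The complexified generalized tangent space `𝕋_ℂ V = V_ℂ ⊕ (V_ℂ)^*`. -/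
abbrev TCx (V : Type*) [AddCommGroup V] [Module ℝ V] := Cx V × DualC V

/-- The ℂ-bilinear pairing on `𝕋_ℂ V`. -/
def pairC (a b : TCx V) : ℂ := (b.2 a.1 + a.2 b.1) / 2

lemma pairC_add_left (a a' b : TCx V) : pairC (a + a') b = pairC a b + pairC a' b := by
  simp only [pairC, Prod.fst_add, Prod.snd_add, map_add, LinearMap.add_apply]
  ring

lemma pairC_smul_left (c : ℂ) (a b : TCx V) : pairC (c • a) b = c * pairC a b := by
  simp only [pairC, Prod.smul_fst, Prod.smul_snd, map_smul, LinearMap.smul_apply,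
    smul_eq_mul]
  ring

/-- Orthogonal complement with respect to the ℂ-bilinear pairing on `𝕋_ℂ V`. -/
def orthC (L : Submodule ℂ (TCx V)) : Submodule ℂ (TCx V) where
  carrier := {a | ∀ b ∈ L, pairC a b = 0}
  zero_mem' := fun b _ => by simp [pairC]
  add_mem' := fun {a a'} ha ha' b hb => by
    rw [pairC_add_left, ha b hb, ha' b hb, add_zero]
  smul_mem' := fun c a ha b hb => by rw [pairC_smul_left, ha b hb, mul_zero]

/-- A complex lagrangian subspace: `L = L^⊥`. -/
def IsLagrangianC (L : Submodule ℂ (TCx V)) : Prop := L = orthC L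

private lemma conjCxAux_smul (z : ℂ) (x : Cx V) :
    TensorProduct.map Complex.conjAe.toLinearMap LinearMap.id (z • x) =
      starRingEnd ℂ z • TensorProduct.map Complex.conjAe.toLinearMap LinearMap.id x := by
  induction x using TensorProduct.induction_on with
  | zero => simp
  | tmul w v => simp [smul_tmul', smul_eq_mul, Complex.conjAe_coe, map_mul]
  | add x y hx hy => simp only [smul_add, map_add, hx, hy]

/-- Conjugation on `V_ℂ`, as a `conj`-semilinear map. -/
def conjCx : Cx V →ₛₗ[starRingEnd ℂ] Cx V where
  toFun := TensorProduct.map Complex.conjAe.toLinearMap LinearMap.id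
  map_add' := map_add _
  map_smul' := conjCxAux_smul

lemma conjCx_smul (z : ℂ) (x : Cx V) :
    conjCx (z • x) = starRingEnd ℂ z • conjCx x := conjCxAux_smul z x

/-- Conjugation of a complex linear functional. -/
def conjDualFun (ξ : DualC V) : DualC V where
  toFun x := starRingEnd ℂ (ξ (conjCx x))
  map_add' x y := by simp
  map_smul' z x := by
    rw [conjCx_smul, map_smul, smul_eq_mul, map_mul, RingHom.id_apply]
    simp [smul_eq_mul]

/-- Conjugation on `(V_ℂ)^*`, as a `conj`-semilinear map. -/
def conjDual : DualC V →ₛₗ[starRingEnd ℂ] DualC V where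
  toFun := conjDualFun
  map_add' ξ η := by ext x; simp [conjDualFun]
  map_smul' z ξ := by
    ext x
    simp [conjDualFun, smul_eq_mul, map_mul]

/-- Conjugation on `𝕋_ℂ V`, as a `conj`-semilinear map. -/
def conjT : TCx V →ₛₗ[starRingEnd ℂ] TCx V where
  toFun a := (conjCx a.1, conjDual a.2)
  map_add' a b := by simp [Prod.ext_iff]
  map_smul' z a := by
    simp [Prod.ext_iff, Prod.smul_fst, Prod.smul_snd, map_smulₛₗ]

instance : RingHomSurjective (starRingEnd ℂ) :=
  ⟨fun z => ⟨starRingEnd ℂ z, by simp⟩⟩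

/-- The conjugate `L̄` of a ℂ-subspace of `𝕋_ℂ V`. -/
def conjSub (L : Submodule ℂ (TCx V)) : Submodule ℂ (TCx V) := L.map conjT

/-- The conjugate `Ē` of a ℂ-subspace of `V_ℂ`. -/
def conjE (E : Submodule ℂ (Cx V)) : Submodule ℂ (Cx V) := E.map conjCx

/-- The canonical inclusion `V → V_ℂ`, `v ↦ 1 ⊗ v`. -/
def iV : V →ₗ[ℝ] Cx V := TensorProduct.mk ℝ ℂ V 1





/-- ℝ-linear auxiliary version of the ℂ-linear extension of a real functional. -/
def dualExtAux (α : V →ₗ[ℝ] ℝ) : Cx V →ₗ[ℝ] ℂ :=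
  TensorProduct.lift
    (LinearMap.mk₂ ℝ (fun z v => z * (α v : ℂ))
      (fun z w v => by push_cast; ring)
      (fun r z v => by simp only [Complex.real_smul]; ring)
      (fun z v w => by push_cast [map_add]; ring)
      (fun r z v => by simp only [map_smul, smul_eq_mul, Complex.real_smul]; push_cast; ring))

private lemma dualExtAux_smulC (α : V →ₗ[ℝ] ℝ) (z : ℂ) (x : Cx V) :
    dualExtAux α (z • x) = z * dualExtAux α x := by
  induction x using TensorProduct.induction_on with
  | zero => simp
  | tmul w v =>
      simp only [dualExtAux, smul_tmul', lift.tmul, LinearMap.mk₂_apply, smul_eq_mul]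
      ring
  | add x y hx hy => simp only [smul_add, map_add, hx, hy]; ring

/-- The ℂ-linear extension of a real functional `α : V → ℝ` to `V_ℂ`. -/
def dualExtFun (α : V →ₗ[ℝ] ℝ) : DualC V where
  toFun := dualExtAux α
  map_add' := map_add _
  map_smul' z x := by simpa using dualExtAux_smulC α z x

private lemma dualExtFun_tmul (α : V →ₗ[ℝ] ℝ) (z : ℂ) (v : V) :
    dualExtFun α (z ⊗ₜ[ℝ] v) = z * (α v : ℂ) := by
  simp [dualExtFun, dualExtAux]

/-- The ℂ-linear extension map `V^* → (V_ℂ)^*`, as an ℝ-linear map. -/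
def dualExt : (V →ₗ[ℝ] ℝ) →ₗ[ℝ] DualC V where
  toFun := dualExtFun
  map_add' α β := by
    apply LinearMap.ext; intro x
    induction x using TensorProduct.induction_on with
    | zero => simp
    | tmul w v =>
        simp only [dualExtFun_tmul, LinearMap.add_apply]
        push_cast
        ring
    | add x y hx hy =>
        simp only [map_add, LinearMap.add_apply] at *
        rw [hx, hy]
  map_smul' r α := by
    apply LinearMap.ext; intro x
    induction x using TensorProduct.induction_on with
    | zero => simp
    | tmul w v =>
        simp only [dualExtFun_tmul, RingHom.id_apply, LinearMap.smul_apply,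
          LinearMap.smul_apply, smul_eq_mul, Complex.real_smul]
        push_cast
        ring
    | add x y hx hy =>
        simp only [map_add, RingHom.id_apply, LinearMap.smul_apply, smul_eq_mul] at *
        rw [hx, hy]

/-- The canonical inclusion `𝕋V → 𝕋_ℂV`. -/
def iT : TR V →ₗ[ℝ] TCx V where
  toFun a := (iV a.1, dualExt a.2)
  map_add' a b := by simp [Prod.ext_iff]
  map_smul' r a := by simp [Prod.ext_iff]



/-- Auxiliary ℝ-linear version of the ℂ-bilinear extension of a real bilinear form. -/
def bilinExtAux (B : V →ₗ[ℝ] V →ₗ[ℝ] ℝ) : Cx V →ₗ[ℝ] DualC V :=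
  TensorProduct.lift
    (LinearMap.mk₂ ℝ (fun z v => z • dualExt (B v))
      (fun z w v => by simp only [add_smul])
      (fun r z v => by simp only [smul_assoc])
      (fun z v w => by simp only [map_add, smul_add])
      (fun r z v => by simp only [map_smul]; exact smul_comm z r _))

private lemma bilinExtAux_smulC (B : V →ₗ[ℝ] V →ₗ[ℝ] ℝ) (z : ℂ) (x : Cx V) :
    bilinExtAux B (z • x) = z • bilinExtAux B x := by
  induction x using TensorProduct.induction_on with
  | zero => simp
  | tmul w v =>
      simp only [bilinExtAux, smul_tmul', lift.tmul, LinearMap.mk₂_apply, smul_eq_mul,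
        mul_smul]
  | add x y hx hy => simp only [smul_add, map_add, hx, hy]

/-- The ℂ-bilinear extension of a real bilinear form `B : V × V → ℝ` to `V_ℂ`. -/
def bilinExt (B : V →ₗ[ℝ] V →ₗ[ℝ] ℝ) : Cx V →ₗ[ℂ] DualC V where
  toFun := bilinExtAux B
  map_add' := map_add _
  map_smul' z x := by simpa using bilinExtAux_smulC B z x

/-- The `B`-transformation `e^B(X+ξ) = X + ξ + B̃(X,·)` of `𝕋_ℂV`, for a real `B`. -/
def eB (B : V →ₗ[ℝ] V →ₗ[ℝ] ℝ) : TCx V →ₗ[ℂ] TCx V where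
  toFun a := (a.1, a.2 + bilinExt B a.1)
  map_add' a b := by
    simp only [Prod.fst_add, Prod.snd_add, map_add, Prod.mk_add_mk, Prod.mk.injEq]
    exact ⟨trivial, by abel⟩
  map_smul' z a := by
    simp only [Prod.smul_fst, Prod.smul_snd, map_smul, RingHom.id_apply, Prod.smul_mk,
      Prod.mk.injEq, smul_add]

/-- The real `B`-transformation `e^B(X+α) = X + α + B(X,·)` of `𝕋V`. -/
def eBR (B : V →ₗ[ℝ] V →ₗ[ℝ] ℝ) : TR V →ₗ[ℝ] TR V where
  toFun a := (a.1, a.2 + B a.1)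
  map_add' a b := by
    simp only [Prod.fst_add, Prod.snd_add, map_add, Prod.mk_add_mk, Prod.mk.injEq]
    exact ⟨trivial, by abel⟩
  map_smul' r a := by
    simp only [Prod.smul_fst, Prod.smul_snd, map_smul, RingHom.id_apply, Prod.smul_mk,
      Prod.mk.injEq, smul_add]


/-- The range `E = pr_{V_ℂ}(L)` of a subspace of `𝕋_ℂV`. -/
def Esub (L : Submodule ℂ (TCx V)) : Submodule ℂ (Cx V) :=
  L.map (LinearMap.fst ℂ (Cx V) (DualC V))

/-- The real index `r = dim_ℂ (L ∩ L̄)`. -/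
def riL (L : Submodule ℂ (TCx V)) : ℕ := finrank ℂ ↥(L ⊓ conjSub L)

/-- The real part `K = (L ∩ L̄) ∩ 𝕋V`, as a subspace of `𝕋V`. -/
def Ksub (L : Submodule ℂ (TCx V)) : Submodule ℝ (TR V) :=
  ((L ⊓ conjSub L).restrictScalars ℝ).comap iT

/-- The distribution `D = (E + Ē) ∩ V`, as a subspace of `V`. -/
def Dsub (L : Submodule ℂ (TCx V)) : Submodule ℝ V :=
  ((Esub L ⊔ conjE (Esub L)).restrictScalars ℝ).comap iV

/-- The distribution `Δ = (E ∩ Ē) ∩ V`, as a subspace of `V`. -/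
def DeltaSub (L : Submodule ℂ (TCx V)) : Submodule ℝ V :=
  ((Esub L ⊓ conjE (Esub L)).restrictScalars ℝ).comap iV

/-- The order `s = dim V - dim D`. -/
def orderL (L : Submodule ℂ (TCx V)) : ℕ := finrank ℝ V - finrank ℝ ↥(Dsub L)

/-- The (normalized) type `k = dim_ℂ(E + Ē) - dim_ℂ E`. -/
def typeL (L : Submodule ℂ (TCx V)) : ℕ :=
  finrank ℂ ↥(Esub L ⊔ conjE (Esub L)) - finrank ℂ ↥(Esub L)


end CDirac

namespace CDirac

section AuxA

variable {V : Type*} [AddCommGroup V] [Module ℝ V]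

lemma smul_decompC {M : Type*} [AddCommGroup M] [Module ℂ M] (z : ℂ) (a : M) :
    z • a = z.re • a + z.im • (Complex.I • a) := by
  nth_rewrite 1 [← Complex.re_add_im z]
  rw [add_smul, mul_smul]
  norm_num

/-- Real part map on `V_ℂ`. -/
def reV : Cx V →ₗ[ℝ] V :=
  TensorProduct.lift (LinearMap.mk₂ ℝ (fun z v => z.re • v)
    (fun z w v => by simp [add_smul])
    (fun r z v => by rw [Complex.smul_re, smul_eq_mul, mul_smul])
    (fun z v w => by simp [smul_add])
    (fun r z v => by rw [smul_comm]))

/-- Imaginary part map on `V_ℂ`. -/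
def imV : Cx V →ₗ[ℝ] V :=
  TensorProduct.lift (LinearMap.mk₂ ℝ (fun z v => z.im • v)
    (fun z w v => by simp [add_smul])
    (fun r z v => by rw [Complex.smul_im, smul_eq_mul, mul_smul])
    (fun z v w => by simp [smul_add])
    (fun r z v => by rw [smul_comm]))

@[simp] lemma reV_tmul (z : ℂ) (v : V) : reV (z ⊗ₜ[ℝ] v) = z.re • v := by simp [reV]
@[simp] lemma imV_tmul (z : ℂ) (v : V) : imV (z ⊗ₜ[ℝ] v) = z.im • v := by simp [imV]

@[simp] lemma reV_iV (v : V) : reV (iV v) = v := by simp [iV]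
@[simp] lemma imV_iV (v : V) : imV (iV v) = 0 := by simp [iV]

@[simp] lemma reV_I (x : Cx V) : reV (Complex.I • x) = - imV x := by
  induction x using TensorProduct.induction_on with
  | zero => simp
  | tmul z v => simp [TensorProduct.smul_tmul', Complex.mul_re, neg_smul]
  | add x y hx hy => simp only [smul_add, map_add, hx, hy]; abel

@[simp] lemma imV_I (x : Cx V) : imV (Complex.I • x) = reV x := by
  induction x using TensorProduct.induction_on with
  | zero => simp
  | tmul z v => simp [TensorProduct.smul_tmul', Complex.mul_im]
  | add x y hx hy => simp only [smul_add, map_add, hx, hy]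

lemma decompV (x : Cx V) : iV (reV x) + Complex.I • iV (imV x) = x := by
  induction x using TensorProduct.induction_on with
  | zero => simp
  | tmul z v =>
      simp only [reV_tmul, imV_tmul, iV, TensorProduct.mk_apply, TensorProduct.tmul_smul]
      simp only [TensorProduct.smul_tmul', ← TensorProduct.add_tmul]
      congr 1; apply Complex.ext <;> simp
  | add x y hx hy =>
      simp only [map_add, smul_add]
      rw [add_add_add_comm, hx, hy]

@[simp] lemma reV_conj (x : Cx V) : reV (conjCx x) = reV x := by
  induction x using TensorProduct.induction_on with
  | zero => simp
  | tmul z v => simp [conjCx, TensorProduct.map_tmul]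
  | add x y hx hy => simp [conjCx] at *; simp [hx, hy]

@[simp] lemma imV_conj (x : Cx V) : imV (conjCx x) = - imV x := by
  induction x using TensorProduct.induction_on with
  | zero => simp
  | tmul z v => simp [conjCx, TensorProduct.map_tmul]
  | add x y hx hy => simp [conjCx] at *; simp [hx, hy]; abel

@[simp] lemma conjCx_conjCx (x : Cx V) : conjCx (conjCx x) = x := by
  induction x using TensorProduct.induction_on with
  | zero => simp [conjCx]
  | tmul z v => simp [conjCx, TensorProduct.map_tmul]
  | add x y hx hy => simp [conjCx] at *; simp [hx, hy]

@[simp] lemma conjCx_iV (v : V) : conjCx (iV v) = iV v := by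
  simp [conjCx, iV, TensorProduct.map_tmul]

lemma dualC_ext {ξ η : DualC V} (h : ∀ v : V, ξ (iV v) = η (iV v)) : ξ = η := by
  apply LinearMap.ext; intro x
  induction x using TensorProduct.induction_on with
  | zero => simp
  | tmul z v =>
      have hz : z ⊗ₜ[ℝ] v = z • iV v := by
        rw [iV, TensorProduct.mk_apply, TensorProduct.smul_tmul', smul_eq_mul, mul_one]
      rw [hz, map_smul, map_smul, h]
  | add x y hx hy => simp [map_add, hx, hy]

lemma dualExt_iV (α : V →ₗ[ℝ] ℝ) (v : V) : dualExt α (iV v) = (α v : ℂ) := by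
  show dualExtFun α ((1 : ℂ) ⊗ₜ[ℝ] v) = (α v : ℂ)
  rw [dualExtFun_tmul, one_mul]

/-- Real part map on complex functionals. -/
def reD : DualC V →ₗ[ℝ] (V →ₗ[ℝ] ℝ) where
  toFun ξ :=
    { toFun := fun v => (ξ (iV v)).re
      map_add' := fun v w => by simp
      map_smul' := fun r v => by
        simp [map_smul, LinearMap.map_smul_of_tower, Complex.smul_re] }
  map_add' ξ η := by ext v; simp
  map_smul' r ξ := by ext v; simp [Complex.smul_re]

/-- Imaginary part map on complex functionals. -/
def imD : DualC V →ₗ[ℝ] (V →ₗ[ℝ] ℝ) where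
  toFun ξ :=
    { toFun := fun v => (ξ (iV v)).im
      map_add' := fun v w => by simp
      map_smul' := fun r v => by
        simp [map_smul, LinearMap.map_smul_of_tower, Complex.smul_im] }
  map_add' ξ η := by ext v; simp
  map_smul' r ξ := by ext v; simp [Complex.smul_im]

@[simp] lemma reD_apply (ξ : DualC V) (v : V) : reD ξ v = (ξ (iV v)).re := rfl
@[simp] lemma imD_apply (ξ : DualC V) (v : V) : imD ξ v = (ξ (iV v)).im := rfl

@[simp] lemma reD_dualExt (α : V →ₗ[ℝ] ℝ) : reD (dualExt α) = α := by
  ext v; simp [dualExt_iV]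

@[simp] lemma imD_dualExt (α : V →ₗ[ℝ] ℝ) : imD (dualExt α) = 0 := by
  ext v; simp [dualExt_iV]

@[simp] lemma reD_I (ξ : DualC V) : reD (Complex.I • ξ) = - imD ξ := by
  ext v; simp [Complex.mul_re]

@[simp] lemma imD_I (ξ : DualC V) : imD (Complex.I • ξ) = reD ξ := by
  ext v; simp [Complex.mul_im]

lemma decompD (ξ : DualC V) : dualExt (reD ξ) + Complex.I • dualExt (imD ξ) = ξ := by
  apply dualC_ext; intro v
  simp only [LinearMap.add_apply, LinearMap.smul_apply, dualExt_iV, smul_eq_mul,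
    reD_apply, imD_apply]
  rw [mul_comm]
  exact Complex.re_add_im _

@[simp] lemma conjDual_dualExt (α : V →ₗ[ℝ] ℝ) : conjDual (dualExt α) = dualExt α := by
  apply dualC_ext; intro v
  simp [conjDual, conjDualFun, dualExt_iV]

@[simp] lemma reD_conj (ξ : DualC V) : reD (conjDual ξ) = reD ξ := by
  ext v; simp [conjDual, conjDualFun]

@[simp] lemma imD_conj (ξ : DualC V) : imD (conjDual ξ) = - imD ξ := by
  ext v; simp [conjDual, conjDualFun]

@[simp] lemma conjDual_conjDual (ξ : DualC V) : conjDual (conjDual ξ) = ξ := by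
  apply dualC_ext; intro v
  simp [conjDual, conjDualFun]

/-- Real part map on `𝕋_ℂ V`. -/
def ReT : TCx V →ₗ[ℝ] TR V := LinearMap.prodMap reV reD
/-- Imaginary part map on `𝕋_ℂ V`. -/
def ImT : TCx V →ₗ[ℝ] TR V := LinearMap.prodMap imV imD

@[simp] lemma ReT_apply (a : TCx V) : ReT a = (reV a.1, reD a.2) := rfl
@[simp] lemma ImT_apply (a : TCx V) : ImT a = (imV a.1, imD a.2) := rfl

@[simp] lemma ReT_iT (u : TR V) : ReT (iT u) = u := by simp [iT]
@[simp] lemma ImT_iT (u : TR V) : ImT (iT u) = 0 := by simp [iT]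

@[simp] lemma ReT_I (a : TCx V) : ReT (Complex.I • a) = - ImT a := by
  simp [Prod.ext_iff]

@[simp] lemma ImT_I (a : TCx V) : ImT (Complex.I • a) = ReT a := by
  simp [Prod.ext_iff]

lemma decompT (a : TCx V) : iT (ReT a) + Complex.I • iT (ImT a) = a := by
  apply Prod.ext
  · simpa [iT] using decompV a.1
  · simpa [iT] using decompD a.2

@[simp] lemma ReT_conjT (a : TCx V) : ReT (conjT a) = ReT a := by simp [conjT]
@[simp] lemma ImT_conjT (a : TCx V) : ImT (conjT a) = - ImT a := by
  simp [conjT, Prod.ext_iff]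

@[simp] lemma conjT_iT (u : TR V) : conjT (iT u) = iT u := by
  simp [conjT, iT]

@[simp] lemma conjT_conjT (a : TCx V) : conjT (conjT a) = a := by
  simp [conjT, Prod.ext_iff]

lemma conjT_eq (a : TCx V) : conjT a = iT (ReT a) - Complex.I • iT (ImT a) := by
  conv_lhs => rw [← decompT (conjT a)]
  rw [ReT_conjT, ImT_conjT, map_neg, smul_neg]
  abel

lemma iT_ReT (a : TCx V) : iT (ReT a) = (2⁻¹ : ℂ) • (a + conjT a) := by
  have h1 : a + conjT a = iT (ReT a) + iT (ReT a) := by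
    rw [conjT_eq]
    nth_rewrite 1 [← decompT a]
    abel
  rw [h1, ← two_smul ℂ, smul_smul]
  norm_num

lemma ReT_mix (u v : TR V) : ReT (iT u + Complex.I • iT v) = u := by
  simp [iT, Prod.ext_iff]
lemma ImT_mix (u v : TR V) : ImT (iT u + Complex.I • iT v) = v := by
  simp [iT, Prod.ext_iff]

end AuxA

end CDirac

namespace CDirac

section AuxB

variable {V : Type*} [AddCommGroup V] [Module ℝ V]

/-- The complexification of a real subspace of `𝕋V`, inside `𝕋_ℂV`. -/
def Ccx (S : Submodule ℝ (TR V)) : Submodule ℂ (TCx V) where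
  carrier := {a | ReT a ∈ S ∧ ImT a ∈ S}
  zero_mem' := by simp; exact S.zero_mem
  add_mem' := by
    intro a b ⟨ha1, ha2⟩ ⟨hb1, hb2⟩
    exact ⟨by rw [map_add]; exact S.add_mem ha1 hb1,
           by rw [map_add]; exact S.add_mem ha2 hb2⟩
  smul_mem' := by
    intro z a ⟨h1, h2⟩
    constructor
    · rw [smul_decompC z a, map_add, map_smul, map_smul, ReT_I]
      exact S.add_mem (S.smul_mem _ h1) (S.smul_mem _ (S.neg_mem h2))
    · rw [smul_decompC z a, map_add, map_smul, map_smul, ImT_I]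
      exact S.add_mem (S.smul_mem _ h2) (S.smul_mem _ h1)

lemma mem_Ccx {S : Submodule ℝ (TR V)} {a : TCx V} :
    a ∈ Ccx S ↔ ReT a ∈ S ∧ ImT a ∈ S := Iff.rfl

lemma iT_mem_Ccx {S : Submodule ℝ (TR V)} {u : TR V} (h : u ∈ S) : iT u ∈ Ccx S := by
  rw [mem_Ccx, ReT_iT, ImT_iT]; exact ⟨h, S.zero_mem⟩

lemma mix_mem_Ccx {S : Submodule ℝ (TR V)} {u v : TR V} (hu : u ∈ S) (hv : v ∈ S) :
    iT u + Complex.I • iT v ∈ Ccx S := by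
  exact (Ccx S).add_mem (iT_mem_Ccx hu) ((Ccx S).smul_mem _ (iT_mem_Ccx hv))

lemma Ccx_eq_span (S : Submodule ℝ (TR V)) :
    Ccx S = Submodule.span ℂ (iT '' (S : Set (TR V))) := by
  apply le_antisymm
  · intro a ⟨h1, h2⟩
    rw [← decompT a]
    apply Submodule.add_mem
    · exact Submodule.subset_span ⟨_, h1, rfl⟩
    · exact Submodule.smul_mem _ _ (Submodule.subset_span ⟨_, h2, rfl⟩)
  · rw [Submodule.span_le]
    rintro _ ⟨u, hu, rfl⟩
    exact iT_mem_Ccx hu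

lemma Ccx_real (S : Submodule ℝ (TR V)) :
    ((Ccx S).restrictScalars ℝ).comap iT = S := by
  ext u
  simp only [Submodule.mem_comap, Submodule.restrictScalars_mem, mem_Ccx, ReT_iT, ImT_iT]
  exact ⟨fun h => h.1, fun h => ⟨h, S.zero_mem⟩⟩

section Stable

variable {W : Submodule ℂ (TCx V)}

lemma stable_re_mem (hW : ∀ a ∈ W, conjT a ∈ W) {a : TCx V} (ha : a ∈ W) : iT (ReT a) ∈ W := by
  rw [iT_ReT]
  exact W.smul_mem _ (W.add_mem ha (hW a ha))

lemma stable_im_mem (hW : ∀ a ∈ W, conjT a ∈ W) {a : TCx V} (ha : a ∈ W) : iT (ImT a) ∈ W := by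
  have h1 : Complex.I • iT (ImT a) ∈ W := by
    have : Complex.I • iT (ImT a) = a - iT (ReT a) := by
      nth_rewrite 2 [← decompT a]; abel
    rw [this]
    exact W.sub_mem ha (stable_re_mem hW ha)
  have h2 := W.smul_mem (-Complex.I) h1
  rwa [smul_smul, neg_mul, Complex.I_mul_I, neg_neg, one_smul] at h2

lemma stable_eq_Ccx (hW : ∀ a ∈ W, conjT a ∈ W) : W = Ccx ((W.restrictScalars ℝ).comap iT) := by
  ext a
  constructor
  · intro ha
    exact ⟨stable_re_mem hW ha, stable_im_mem hW ha⟩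
  · rintro ⟨h1, h2⟩
    rw [← decompT a]
    exact W.add_mem h1 (W.smul_mem _ h2)

lemma stable_finrank (hW : ∀ a ∈ W, conjT a ∈ W) [FiniteDimensional ℝ V] :
    finrank ℝ ((W.restrictScalars ℝ).comap iT) = finrank ℂ W := by
  set Wr := (W.restrictScalars ℝ).comap iT with hWr
  have e : (Wr × Wr) ≃ₗ[ℝ] (W.restrictScalars ℝ) :=
    { toFun := fun p => ⟨iT p.1 + Complex.I • iT p.2,
        W.add_mem p.1.2 (W.smul_mem _ p.2.2)⟩
      map_add' := by
        intro p q
        apply Subtype.ext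
        simp only [Prod.fst_add, Prod.snd_add, map_add, smul_add, Submodule.coe_add]
        abel
      map_smul' := by
        intro r p
        apply Subtype.ext
        simp only [Prod.smul_fst, Prod.smul_snd, map_smul, RingHom.id_apply,
          SetLike.val_smul, smul_add]
        rw [smul_comm r Complex.I]
      invFun := fun w => (⟨ReT w.1, stable_re_mem hW w.2⟩, ⟨ImT w.1, stable_im_mem hW w.2⟩)
      left_inv := by
        intro p
        apply Prod.ext <;> apply Subtype.ext
        · exact ReT_mix _ _
        · exact ImT_mix _ _
      right_inv := by
        intro w
        apply Subtype.ext
        exact decompT w.1 }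
  have h1 : finrank ℝ (Wr × Wr) = finrank ℝ (W.restrictScalars ℝ) := e.finrank_eq
  rw [Module.finrank_prod] at h1
  have h2 : finrank ℝ (W.restrictScalars ℝ) = finrank ℝ W :=
    ((Submodule.restrictScalarsEquiv ℝ ℂ _ W).restrictScalars ℝ).finrank_eq
  have h3 : finrank ℝ ℂ * finrank ℂ W = finrank ℝ W := Module.finrank_mul_finrank ℝ ℂ W
  rw [Complex.finrank_real_complex] at h3
  omega

end Stable

lemma pairR_comm (a b : TR V) : pairR a b = pairR b a := by
  simp [pairR]; ring

lemma pairC_comm (a b : TCx V) : pairC a b = pairC b a := by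
  simp [pairC]; ring

lemma pairC_add_right (a b b' : TCx V) : pairC a (b + b') = pairC a b + pairC a b' := by
  rw [pairC_comm, pairC_add_left, pairC_comm b, pairC_comm b']

lemma pairC_smul_right (c : ℂ) (a b : TCx V) : pairC a (c • b) = c * pairC a b := by
  rw [pairC_comm, pairC_smul_left, pairC_comm]

lemma pairC_iT (a b : TR V) : pairC (iT a) (iT b) = (pairR a b : ℂ) := by
  simp only [pairC, pairR, iT, LinearMap.coe_mk, AddHom.coe_mk, dualExt_iV]
  push_cast
  ring

lemma conjDual_apply (ξ : DualC V) (x : Cx V) :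
    conjDual ξ x = starRingEnd ℂ (ξ (conjCx x)) := rfl

lemma conjT_fst (a : TCx V) : (conjT a).1 = conjCx a.1 := rfl
lemma conjT_snd (a : TCx V) : (conjT a).2 = conjDual a.2 := rfl

lemma pairC_conjT (a b : TCx V) :
    pairC (conjT a) (conjT b) = starRingEnd ℂ (pairC a b) := by
  simp only [pairC, conjT_fst, conjT_snd, conjDual_apply, conjCx_conjCx, map_add, map_div₀, map_ofNat]

lemma mem_orthC {M : Submodule ℂ (TCx V)} {a : TCx V} :
    a ∈ orthC M ↔ ∀ b ∈ M, pairC a b = 0 := Iff.rfl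

lemma mem_orthR {M : Submodule ℝ (TR V)} {a : TR V} :
    a ∈ orthR M ↔ ∀ b ∈ M, pairR a b = 0 := Iff.rfl

lemma pairC_mix_iT (x y s : TR V) :
    pairC (iT x + Complex.I • iT y) (iT s)
      = (pairR x s : ℂ) + Complex.I * (pairR y s : ℂ) := by
  rw [pairC_add_left, pairC_smul_left, pairC_iT, pairC_iT]

lemma pairC_left_iT (a : TCx V) (s : TR V) :
    pairC a (iT s) = (pairR (ReT a) s : ℂ) + Complex.I * (pairR (ImT a) s : ℂ) := by
  conv_lhs => rw [← decompT a]
  rw [pairC_mix_iT]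

lemma orthC_Ccx (S : Submodule ℝ (TR V)) : orthC (Ccx S) = Ccx (orthR S) := by
  ext a
  rw [mem_orthC, mem_Ccx]
  constructor
  · intro h
    constructor <;> intro s hs <;>
    · have h0 := h (iT s) (iT_mem_Ccx hs)
      rw [pairC_left_iT] at h0
      have hre := congrArg Complex.re h0
      have him := congrArg Complex.im h0
      simp at hre him
      first
        | exact hre
        | exact him
  · rintro ⟨h1, h2⟩ b hb
    rw [← decompT b, pairC_add_right, pairC_smul_right, pairC_left_iT, pairC_left_iT,
      h1 _ hb.1, h2 _ hb.1, h1 _ hb.2, h2 _ hb.2]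
    simp

/-- The pairing as a bilinear form on `𝕋V`. -/
def bR : LinearMap.BilinForm ℝ (TR V) :=
  LinearMap.mk₂ ℝ pairR pairR_add_left
    (fun c a b => by rw [pairR_smul_left, smul_eq_mul])
    (fun a b b' => by rw [pairR_comm, pairR_add_left, pairR_comm b, pairR_comm b'])
    (fun c a b => by rw [pairR_comm, pairR_smul_left, pairR_comm, smul_eq_mul])

@[simp] lemma bR_apply (a b : TR V) : bR a b = pairR a b := rfl

/-- The pairing as a bilinear form on `𝕋_ℂV`. -/
def bC : LinearMap.BilinForm ℂ (TCx V) :=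
  LinearMap.mk₂ ℂ pairC pairC_add_left
    (fun c a b => by rw [pairC_smul_left, smul_eq_mul])
    (fun a b b' => by rw [pairC_comm, pairC_add_left, pairC_comm b, pairC_comm b'])
    (fun c a b => by rw [pairC_comm, pairC_smul_left, pairC_comm, smul_eq_mul])

@[simp] lemma bC_apply (a b : TCx V) : bC a b = pairC a b := rfl

lemma bR_refl : LinearMap.BilinForm.IsRefl (bR (V := V)) := by
  intro a b h
  rwa [bR_apply, pairR_comm, ← bR_apply]

lemma bC_refl : LinearMap.BilinForm.IsRefl (bC (V := V)) := by
  intro a b h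
  rwa [bC_apply, pairC_comm, ← bC_apply]

lemma orthR_eq (M : Submodule ℝ (TR V)) : orthR M = bR.orthogonal M := by
  ext a
  rw [mem_orthR, LinearMap.BilinForm.mem_orthogonal_iff]
  constructor
  · intro h b hb
    rw [bR_apply, pairR_comm]
    exact h b hb
  · intro h b hb
    have := h b hb
    rw [bR_apply, pairR_comm] at this
    exact this

lemma orthC_eq (M : Submodule ℂ (TCx V)) : orthC M = bC.orthogonal M := by
  ext a
  rw [mem_orthC, LinearMap.BilinForm.mem_orthogonal_iff]
  constructor
  · intro h b hb
    rw [bC_apply, pairC_comm]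
    exact h b hb
  · intro h b hb
    have := h b hb
    rw [bC_apply, pairC_comm] at this
    exact this

variable [FiniteDimensional ℝ V]

lemma bR_nondeg : LinearMap.BilinForm.Nondegenerate (bR (V := V)) := by
  refine (LinearMap.IsRefl.nondegenerate_iff_separatingLeft (fun a b h => bR_refl a b h)).mpr ?_
  intro a h
  have h2 : a.2 = 0 := by
    apply LinearMap.ext; intro x
    have := h (x, 0)
    simp only [bR_apply, pairR] at this
    simp only [LinearMap.zero_apply] at this ⊢
    linarith
  have h1 : a.1 = 0 := by
    rw [← Module.forall_dual_apply_eq_zero_iff ℝ a.1]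
    intro φ
    have := h (0, φ)
    simp only [bR_apply, pairR, h2] at this
    simp only [LinearMap.zero_apply] at this
    linarith
  exact Prod.ext h1 h2

lemma bC_nondeg : LinearMap.BilinForm.Nondegenerate (bC (V := V)) := by
  refine (LinearMap.IsRefl.nondegenerate_iff_separatingLeft (fun a b h => bC_refl a b h)).mpr ?_
  intro a h
  have h2 : a.2 = 0 := by
    apply LinearMap.ext; intro x
    have := h (x, 0)
    simp only [bC_apply, pairC] at this
    simp only [LinearMap.zero_apply] at this ⊢
    field_simp at this
    simpa using this
  have h1 : a.1 = 0 := by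
    rw [← Module.forall_dual_apply_eq_zero_iff ℂ a.1]
    intro φ
    have := h (0, φ)
    simp only [bC_apply, pairC, h2] at this
    simp only [LinearMap.zero_apply] at this
    field_simp at this
    simpa using this
  exact Prod.ext h1 h2

lemma orthR_orthR (M : Submodule ℝ (TR V)) : orthR (orthR M) = M := by
  rw [orthR_eq, orthR_eq]
  exact LinearMap.BilinForm.orthogonal_orthogonal (B := bR) bR_nondeg bR_refl M

lemma finrank_orthC_add (M : Submodule ℂ (TCx V)) :
    finrank ℂ M + finrank ℂ (orthC M) = finrank ℂ (TCx V) := by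
  rw [orthC_eq]
  have := LinearMap.BilinForm.finrank_add_finrank_orthogonal (B := bC (V := V)) bC_refl M
  rwa [LinearMap.BilinForm.orthogonal_top_eq_bot bC_nondeg, inf_bot_eq, finrank_bot,
    add_zero] at this

end AuxB

end CDirac

namespace CDirac

section AuxC

variable {V : Type*} [AddCommGroup V] [Module ℝ V]

lemma mem_conjSub {L : Submodule ℂ (TCx V)} {a : TCx V} :
    a ∈ conjSub L ↔ conjT a ∈ L := by
  constructor
  · rintro ⟨b, hb, rfl⟩
    rwa [conjT_conjT]
  · intro h
    exact ⟨conjT a, h, conjT_conjT a⟩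

lemma mem_Ksub {L : Submodule ℂ (TCx V)} {a : TR V} :
    a ∈ Ksub L ↔ iT a ∈ L ⊓ conjSub L := Iff.rfl

lemma inf_conj_stable (L : Submodule ℂ (TCx V)) :
    ∀ a ∈ L ⊓ conjSub L, conjT a ∈ L ⊓ conjSub L := by
  rintro a ⟨h1, h2⟩
  exact ⟨mem_conjSub.mp h2, mem_conjSub.mpr (by rwa [conjT_conjT])⟩

variable {L : Submodule ℂ (TCx V)} (hL : IsLagrangianC L)

lemma lag_pair (hL : IsLagrangianC L) {x y : TCx V} (hx : x ∈ L) (hy : y ∈ L) :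
    pairC x y = 0 := by
  rw [hL] at hx
  exact hx y hy

lemma conjT_mem_orthC {M : Submodule ℂ (TCx V)} {a : TCx V} :
    conjT a ∈ orthC M ↔ a ∈ orthC (conjSub M) := by
  constructor
  · intro h b hb
    obtain ⟨b₀, hb₀, rfl⟩ := hb
    calc pairC a (conjT b₀) = pairC (conjT (conjT a)) (conjT b₀) := by rw [conjT_conjT]
    _ = starRingEnd ℂ (pairC (conjT a) b₀) := pairC_conjT _ _
    _ = 0 := by rw [h b₀ hb₀, map_zero]
  · intro h b hb
    calc pairC (conjT a) b = pairC (conjT a) (conjT (conjT b)) := by rw [conjT_conjT]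
    _ = starRingEnd ℂ (pairC a (conjT b)) := pairC_conjT _ _
    _ = 0 := by
          rw [h (conjT b) (mem_conjSub.mpr (by rw [conjT_conjT]; exact hb)), map_zero]

lemma conj_lagrangian (hL : IsLagrangianC L) : IsLagrangianC (conjSub L) := by
  ext a
  rw [mem_conjSub]
  nth_rewrite 1 [hL]
  exact conjT_mem_orthC

lemma inf_eq_Ccx (hL : IsLagrangianC L) : L ⊓ conjSub L = Ccx (Ksub L) :=
  stable_eq_Ccx (inf_conj_stable L)

variable [FiniteDimensional ℝ V]

lemma finrank_Ksub (hL : IsLagrangianC L) :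
    finrank ℝ (Ksub L) = finrank ℂ ↥(L ⊓ conjSub L) :=
  stable_finrank (inf_conj_stable L)

lemma Ksub_isotropic (hL : IsLagrangianC L) : IsIsotropicR (Ksub L) := by
  intro a ha b hb
  have h := lag_pair hL (mem_Ksub.mp ha).1 (mem_Ksub.mp hb).1
  rw [pairC_iT] at h
  exact_mod_cast h

lemma sup_eq_orthC_inf (hL : IsLagrangianC L) :
    L ⊔ conjSub L = orthC (L ⊓ conjSub L) := by
  have hle : L ⊔ conjSub L ≤ orthC (L ⊓ conjSub L) := by
    apply sup_le
    · nth_rewrite 1 [hL]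
      rw [orthC_eq, orthC_eq]
      exact LinearMap.BilinForm.orthogonal_le inf_le_left
    · nth_rewrite 1 [conj_lagrangian hL]
      rw [orthC_eq, orthC_eq]
      exact LinearMap.BilinForm.orthogonal_le inf_le_right
  have h1 := finrank_orthC_add (L ⊓ conjSub L)
  have h2 := finrank_orthC_add L
  have h3 := finrank_orthC_add (conjSub L)
  rw [← hL] at h2
  rw [← conj_lagrangian hL] at h3
  have h4 := Submodule.finrank_sup_add_finrank_inf_eq L (conjSub L)
  exact Submodule.eq_of_le_of_finrank_le hle (by omega)

lemma sup_eq_Ccx (hL : IsLagrangianC L) :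
    L ⊔ conjSub L = Ccx (orthR (Ksub L)) := by
  rw [sup_eq_orthC_inf hL, inf_eq_Ccx hL, orthC_Ccx]

lemma rel_total (hL : IsLagrangianC L) {u : TR V} (hu : u ∈ orthR (Ksub L)) :
    ∃ v : TR V, iT u + Complex.I • iT v ∈ L := by
  have h0 : iT u ∈ L ⊔ conjSub L := by
    rw [sup_eq_Ccx hL]
    exact iT_mem_Ccx hu
  obtain ⟨x, hx, y, hy, hxy⟩ := Submodule.mem_sup.mp h0
  obtain ⟨m, hm, rfl⟩ := hy
  refine ⟨ImT (x + m), ?_⟩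
  have hR : ReT (x + m) = u := by
    have := congrArg ReT hxy
    rw [ReT_iT] at this
    rw [← this]
    simp only [map_add, ReT_conjT]
  have := decompT (x + m)
  rw [hR] at this
  rw [this]
  exact L.add_mem hx hm

lemma rel_mem (hL : IsLagrangianC L) {u v : TR V} (h : iT u + Complex.I • iT v ∈ L) :
    u ∈ orthR (Ksub L) ∧ v ∈ orthR (Ksub L) := by
  have h0 : iT u + Complex.I • iT v ∈ Ccx (orthR (Ksub L)) := by
    rw [← sup_eq_Ccx hL]
    exact le_sup_left (α := Submodule ℂ (TCx V)) h
  obtain ⟨h1, h2⟩ := mem_Ccx.mp h0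
  rw [ReT_mix] at h1
  rw [ImT_mix] at h2
  exact ⟨h1, h2⟩

lemma rel_ker (hL : IsLagrangianC L) {u v : TR V}
    (h : iT u + Complex.I • iT v ∈ L) (hu : u ∈ Ksub L) : v ∈ Ksub L := by
  have h1 : iT u ∈ L := (mem_Ksub.mp hu).1
  have h2 : Complex.I • iT v ∈ L := by
    have : Complex.I • iT v = (iT u + Complex.I • iT v) - iT u := by abel
    rw [this]
    exact L.sub_mem h h1
  have h3 : iT v ∈ L := by
    have := L.smul_mem (-Complex.I) h2
    rwa [smul_smul, neg_mul, Complex.I_mul_I, neg_neg, one_smul] at this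
  rw [mem_Ksub]
  exact ⟨h3, mem_conjSub.mpr (by rwa [conjT_iT])⟩

lemma rel_I (hL : IsLagrangianC L) {u v : TR V}
    (h : iT u + Complex.I • iT v ∈ L) : iT (-v) + Complex.I • iT u ∈ L := by
  have := L.smul_mem Complex.I h
  have heq : Complex.I • (iT u + Complex.I • iT v) = iT (-v) + Complex.I • iT u := by
    rw [smul_add, smul_smul, Complex.I_mul_I, map_neg, neg_one_smul]
    abel
  rwa [heq] at this

lemma rel_skew (hL : IsLagrangianC L) {u v u' v' : TR V}
    (h : iT u + Complex.I • iT v ∈ L) (h' : iT u' + Complex.I • iT v' ∈ L) :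
    pairR u v' + pairR v u' = 0 := by
  have h0 := lag_pair hL h h'
  rw [pairC_add_left, pairC_smul_left, pairC_add_right, pairC_add_right,
    pairC_smul_right, pairC_smul_right, pairC_iT, pairC_iT, pairC_iT, pairC_iT] at h0
  have := congrArg Complex.im h0
  simp [Complex.add_im, Complex.mul_im] at this
  linarith

end AuxC

end CDirac

namespace CDirac

section AuxD

variable {V : Type*} [AddCommGroup V] [Module ℝ V]

lemma exists_B (K : Submodule ℝ (TR V)) :
    ∃ B : quotK K →ₗ[ℝ] quotK K →ₗ[ℝ] ℝ,
      ∀ x y : ↥(orthR K), B (mkK K x) (mkK K y) = pairR (x : TR V) (y : TR V) := by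
  classical
  set pb : ↥(orthR K) →ₗ[ℝ] ↥(orthR K) →ₗ[ℝ] ℝ :=
    bR.compl₁₂ (orthR K).subtype (orthR K).subtype with hpb
  have hpb_apply : ∀ x y : ↥(orthR K), pb x y = pairR (x : TR V) (y : TR V) := by
    intro x y
    rw [hpb, LinearMap.compl₁₂_apply, bR_apply]
    rfl
  have hinner : ∀ x : ↥(orthR K), K.comap (orthR K).subtype ≤ LinearMap.ker (pb x) := by
    intro x y hy
    rw [LinearMap.mem_ker, hpb_apply]
    exact x.2 _ hy
  set g : ↥(orthR K) →ₗ[ℝ] (quotK K →ₗ[ℝ] ℝ) :=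
    { toFun := fun x => (K.comap (orthR K).subtype).liftQ (pb x) (hinner x)
      map_add' := by
        intro x x'
        apply Submodule.linearMap_qext
        apply LinearMap.ext; intro y
        simp only [LinearMap.comp_apply, Submodule.mkQ_apply, Submodule.liftQ_apply,
          LinearMap.add_apply, map_add]
      map_smul' := by
        intro c x
        apply Submodule.linearMap_qext
        apply LinearMap.ext; intro y
        simp only [LinearMap.comp_apply, Submodule.mkQ_apply, Submodule.liftQ_apply,
          RingHom.id_apply, LinearMap.smul_apply, map_smul] } with hg
  have hg_apply : ∀ (x y : ↥(orthR K)), g x (mkK K y) = pairR (x : TR V) (y : TR V) := by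
    intro x y
    show ((K.comap (orthR K).subtype).liftQ (pb x) (hinner x)) (mkK K y) = _
    rw [mkK, Submodule.mkQ_apply, Submodule.liftQ_apply, hpb_apply]
  have houter : K.comap (orthR K).subtype ≤ LinearMap.ker g := by
    intro x hx
    rw [LinearMap.mem_ker]
    apply Submodule.linearMap_qext
    apply LinearMap.ext; intro y
    show g x (Submodule.Quotient.mk y) = _
    have : g x (mkK K y) = pairR (x : TR V) (y : TR V) := hg_apply x y
    rw [mkK, Submodule.mkQ_apply] at this
    rw [this, pairR_comm]
    simpa using y.2 _ hx
  refine ⟨(K.comap (orthR K).subtype).liftQ g houter, ?_⟩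
  intro x y
  rw [mkK, Submodule.mkQ_apply, Submodule.liftQ_apply]
  have := hg_apply x y
  rwa [mkK, Submodule.mkQ_apply] at this

end AuxD

end CDirac

open CDirac Module

set_option maxHeartbeats 2000000 in
/-- For a lagrangian `L ⊆ 𝕋_ℂV` of real index `r`, the real part
`K = (L ∩ L̄) ∩ 𝕋V` is isotropic of dimension `r` with `L ∩ L̄ = K_ℂ`; the pairing
descends to a unique, nondegenerate, symmetric bilinear form on `K^⊥/K`; and there is a
unique skew `J` on `K^⊥/K` with `J² = -id` whose `+i`-eigenspace (of its
complexification) is the image of `L` in `(K^⊥/K)_ℂ ≅ (L + L̄)/(L ∩ L̄)`. -/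
theorem stmt5 (V : Type*) [AddCommGroup V] [Module ℝ V] [FiniteDimensional ℝ V]
    (L : Submodule ℂ (TCx V)) (hL : IsLagrangianC L)
    (r : ℕ) (hr : r = finrank ℂ ↥(L ⊓ conjSub L))
    (K : Submodule ℝ (TR V)) (hK : K = Ksub L) :
    -- (i)
    (IsIsotropicR K ∧ finrank ℝ ↥K = r ∧
      L ⊓ conjSub L = Submodule.span ℂ (iT '' (K : Set (TR V)))) ∧
    -- (ii)
    (∃ B : quotK K →ₗ[ℝ] quotK K →ₗ[ℝ] ℝ,
      ((∀ x y : ↥(orthR K), B (mkK K x) (mkK K y) = pairR (x : TR V) (y : TR V)) ∧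
       (∀ q q' : quotK K, B q q' = B q' q) ∧
       (∀ q : quotK K, (∀ q' : quotK K, B q q' = 0) → q = 0)) ∧
      (∀ B' : quotK K →ₗ[ℝ] quotK K →ₗ[ℝ] ℝ,
        (∀ x y : ↥(orthR K), B' (mkK K x) (mkK K y) = pairR (x : TR V) (y : TR V)) →
        B' = B)) ∧
    -- (iii)
    (∀ B : quotK K →ₗ[ℝ] quotK K →ₗ[ℝ] ℝ,
      (∀ x y : ↥(orthR K), B (mkK K x) (mkK K y) = pairR (x : TR V) (y : TR V)) →
      ∃! J : quotK K →ₗ[ℝ] quotK K,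
        (∀ q : quotK K, J (J q) = -q) ∧
        (∀ q q' : quotK K, B (J q) q' + B q (J q') = 0) ∧
        (∀ (u v : TR V) (hu : u ∈ orthR K) (hv : v ∈ orthR K),
          (iT u + Complex.I • iT v ∈ L ↔ J (mkK K ⟨u, hu⟩) = - mkK K ⟨v, hv⟩))) := by
  subst hK
  subst hr
  refine ⟨⟨Ksub_isotropic hL, finrank_Ksub hL, by rw [inf_eq_Ccx hL, Ccx_eq_span]⟩, ?_, ?_⟩
  · -- part (ii)
    obtain ⟨B, hB⟩ := exists_B (Ksub L)
    have hsurj : Function.Surjective (mkK (Ksub L)) := Submodule.mkQ_surjective _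
    refine ⟨B, ⟨hB, ?_, ?_⟩, ?_⟩
    · intro q q'
      obtain ⟨x, rfl⟩ := hsurj q
      obtain ⟨y, rfl⟩ := hsurj q'
      rw [hB, hB, pairR_comm]
    · intro q h0
      obtain ⟨x, rfl⟩ := hsurj q
      have hx : (x : TR V) ∈ orthR (orthR (Ksub L)) := by
        rw [mem_orthR]
        intro b hb
        have h1 := h0 (mkK (Ksub L) ⟨b, hb⟩)
        have h2 := hB x ⟨b, hb⟩
        rw [h2] at h1
        exact h1
      rw [orthR_orthR] at hx
      exact (Submodule.Quotient.mk_eq_zero _).mpr hx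
    · intro B' hB'
      refine LinearMap.ext fun q => LinearMap.ext fun q' => ?_
      obtain ⟨x, rfl⟩ := hsurj q
      obtain ⟨y, rfl⟩ := hsurj q'
      rw [hB', hB]
  · -- part (iii)
    intro B hB
    have hsurj : Function.Surjective (mkK (Ksub L)) := Submodule.mkQ_surjective _
    have hdiff : ∀ {u v : TR V} (hu : u ∈ orthR (Ksub L)) (hv : v ∈ orthR (Ksub L)),
        mkK (Ksub L) ⟨u, hu⟩ = mkK (Ksub L) ⟨v, hv⟩ ↔ u - v ∈ Ksub L := by
      intro u v hu hv
      rw [mkK, Submodule.mkQ_apply, Submodule.mkQ_apply, Submodule.Quotient.eq]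
      exact Iff.rfl
    have funct : ∀ {u v u' v' : TR V} (hu : u ∈ orthR (Ksub L)) (hv : v ∈ orthR (Ksub L))
        (hu' : u' ∈ orthR (Ksub L)) (hv' : v' ∈ orthR (Ksub L)),
        iT u + Complex.I • iT v ∈ L → iT u' + Complex.I • iT v' ∈ L →
        mkK (Ksub L) ⟨u, hu⟩ = mkK (Ksub L) ⟨u', hu'⟩ →
        mkK (Ksub L) ⟨v, hv⟩ = mkK (Ksub L) ⟨v', hv'⟩ := by
      intro u v u' v' hu hv hu' hv' h h' heq
      rw [hdiff] at heq ⊢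
      have heq2 : iT (u - u') + Complex.I • iT (v - v') =
          (iT u + Complex.I • iT v) - (iT u' + Complex.I • iT v') := by
        rw [map_sub, map_sub, smul_sub]; abel
      have hL1 : iT (u - u') + Complex.I • iT (v - v') ∈ L := by
        rw [heq2]; exact L.sub_mem h h'
      exact rel_ker hL hL1 heq
    have totalP : ∀ q : quotK (Ksub L), ∃ p : quotK (Ksub L),
        ∃ (u v : TR V) (hu : u ∈ orthR (Ksub L)) (hv : v ∈ orthR (Ksub L)),
          mkK (Ksub L) ⟨u, hu⟩ = q ∧ mkK (Ksub L) ⟨v, hv⟩ = p ∧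
          iT u + Complex.I • iT v ∈ L := by
      intro q
      obtain ⟨x, rfl⟩ := hsurj q
      obtain ⟨v, hv⟩ := rel_total hL x.2
      exact ⟨mkK (Ksub L) ⟨v, (rel_mem hL hv).2⟩, x.1, v, x.2, (rel_mem hL hv).2,
        rfl, rfl, hv⟩
    classical
    let Jf : quotK (Ksub L) → quotK (Ksub L) := fun q => -(totalP q).choose
    have Jspec : ∀ (u v : TR V) (hu : u ∈ orthR (Ksub L)) (hv : v ∈ orthR (Ksub L)),
        iT u + Complex.I • iT v ∈ L →
        Jf (mkK (Ksub L) ⟨u, hu⟩) = -(mkK (Ksub L) ⟨v, hv⟩) := by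
      intro u v hu hv h
      obtain ⟨u₀, v₀, hu₀, hv₀, hq, hp, h₀⟩ :=
        (totalP (mkK (Ksub L) ⟨u, hu⟩)).choose_spec
      have hvv : mkK (Ksub L) ⟨v₀, hv₀⟩ = mkK (Ksub L) ⟨v, hv⟩ :=
        funct hu₀ hv₀ hu hv h₀ h hq
      show -(totalP (mkK (Ksub L) ⟨u, hu⟩)).choose = -(mkK (Ksub L) ⟨v, hv⟩)
      rw [← hp, hvv]
    have Jadd : ∀ q q', Jf (q + q') = Jf q + Jf q' := by
      intro q q'
      obtain ⟨p, u, v, hu, hv, hq, hp, hrel⟩ := totalP q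
      obtain ⟨p', u', v', hu', hv', hq', hp', hrel'⟩ := totalP q'
      have hsum : iT (u + u') + Complex.I • iT (v + v') ∈ L := by
        have heq : iT (u + u') + Complex.I • iT (v + v') =
            (iT u + Complex.I • iT v) + (iT u' + Complex.I • iT v') := by
          rw [map_add, map_add, smul_add]; abel
        rw [heq]; exact L.add_mem hrel hrel'
      have h3 := Jspec (u + u') (v + v') (add_mem hu hu') (add_mem hv hv') hsum
      have hqq : mkK (Ksub L) ⟨u + u', add_mem hu hu'⟩ = q + q' := by
        rw [← hq, ← hq']
        exact map_add (mkK (Ksub L)) ⟨u, hu⟩ ⟨u', hu'⟩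
      have hvv : mkK (Ksub L) ⟨v + v', add_mem hv hv'⟩ =
          mkK (Ksub L) ⟨v, hv⟩ + mkK (Ksub L) ⟨v', hv'⟩ :=
        map_add (mkK (Ksub L)) ⟨v, hv⟩ ⟨v', hv'⟩
      rw [← hqq, h3, hvv, ← hq, ← hq', Jspec u v hu hv hrel, Jspec u' v' hu' hv' hrel']
      abel
    have Jsmul : ∀ (c : ℝ) (q), Jf (c • q) = c • Jf q := by
      intro c q
      obtain ⟨p, u, v, hu, hv, hq, hp, hrel⟩ := totalP q
      have hsm : iT (c • u) + Complex.I • iT (c • v) ∈ L := by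
        have h1 : ((c : ℂ)) • (iT u + Complex.I • iT v) ∈ L := L.smul_mem _ hrel
        have heq : iT (c • u) + Complex.I • iT (c • v) =
            ((c : ℂ)) • (iT u + Complex.I • iT v) := by
          rw [map_smul, map_smul, smul_add, Complex.coe_smul, Complex.coe_smul,
            smul_comm c Complex.I]
          rfl
        rw [heq]; exact h1
      have h3 := Jspec (c • u) (c • v) ((orthR (Ksub L)).smul_mem c hu) ((orthR (Ksub L)).smul_mem c hv) hsm
      have hqq : mkK (Ksub L) ⟨c • u, (orthR (Ksub L)).smul_mem c hu⟩ = c • q := by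
        rw [← hq]
        exact map_smul (mkK (Ksub L)) c ⟨u, hu⟩
      have hvv : mkK (Ksub L) ⟨c • v, (orthR (Ksub L)).smul_mem c hv⟩ = c • mkK (Ksub L) ⟨v, hv⟩ :=
        map_smul (mkK (Ksub L)) c ⟨v, hv⟩
      rw [← hqq, h3, hvv, ← hq, Jspec u v hu hv hrel, smul_neg]
    let J : quotK (Ksub L) →ₗ[ℝ] quotK (Ksub L) :=
      { toFun := Jf
        map_add' := Jadd
        map_smul' := Jsmul }
    have JspecL : ∀ (u v : TR V) (hu : u ∈ orthR (Ksub L)) (hv : v ∈ orthR (Ksub L)),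
        iT u + Complex.I • iT v ∈ L →
        J (mkK (Ksub L) ⟨u, hu⟩) = -(mkK (Ksub L) ⟨v, hv⟩) := Jspec
    refine ⟨J, ⟨?_, ?_, ?_⟩, ?_⟩
    · -- J² = -1
      intro q
      obtain ⟨p, u, v, hu, hv, hq, hp, hrel⟩ := totalP q
      have h1 : J q = -(mkK (Ksub L) ⟨v, hv⟩) := by
        rw [← hq]; exact JspecL u v hu hv hrel
      have hrel2 : iT v + Complex.I • iT (-u) ∈ L := by
        have h2 := rel_I hL (rel_I hL (rel_I hL hrel))
        rwa [neg_neg] at h2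
      have h3 := JspecL v (-u) hv (neg_mem hu) hrel2
      calc J (J q) = J (-(mkK (Ksub L) ⟨v, hv⟩)) := by rw [h1]
        _ = -(J (mkK (Ksub L) ⟨v, hv⟩)) := map_neg J _
        _ = mkK (Ksub L) ⟨-u, neg_mem hu⟩ := by rw [h3, neg_neg]
        _ = -(mkK (Ksub L) ⟨u, hu⟩) := map_neg (mkK (Ksub L)) ⟨u, hu⟩
        _ = -q := by rw [hq]
    · -- skew
      intro q q'
      obtain ⟨p, u, v, hu, hv, hq, hp, hrel⟩ := totalP q
      obtain ⟨p', u', v', hu', hv', hq', hp', hrel'⟩ := totalP q'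
      rw [← hq, ← hq', JspecL u v hu hv hrel, JspecL u' v' hu' hv' hrel']
      simp only [map_neg, LinearMap.neg_apply]
      rw [hB, hB]
      have := rel_skew hL hrel hrel'
      linarith
    · -- eigenspace characterization
      intro u v hu hv
      constructor
      · exact JspecL u v hu hv
      · intro hJ
        obtain ⟨v₀, h₀⟩ := rel_total hL hu
        have hv₀ := (rel_mem hL h₀).2
        have hJ0 := JspecL u v₀ hu hv₀ h₀
        have hveq : mkK (Ksub L) ⟨v, hv⟩ = mkK (Ksub L) ⟨v₀, hv₀⟩ :=
          neg_inj.mp (hJ.symm.trans hJ0)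
        rw [hdiff] at hveq
        have hmem : iT (v - v₀) ∈ L := (mem_Ksub.mp hveq).1
        have heq : iT u + Complex.I • iT v =
            (iT u + Complex.I • iT v₀) + Complex.I • iT (v - v₀) := by
          rw [map_sub, smul_sub]; abel
        rw [heq]
        exact L.add_mem h₀ (L.smul_mem _ hmem)
    · -- uniqueness
      intro J' hJ'
      obtain ⟨hJ'1, hJ'2, hJ'3⟩ := hJ'
      refine LinearMap.ext fun q => ?_
      obtain ⟨p, u, v, hu, hv, hq, hp, hrel⟩ := totalP q
      rw [← hq, (hJ'3 u v hu hv).mp hrel, JspecL u v hu hv hrel]
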